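/- Let D be a k×k Metzler matrix, c > 0, μ < 0, and ξ ∈ ℝ^k a positive right eigenvector of D with D ξ = μ ξ; set ξ̄ = max_i ξ_i. Let u : [0,∞) → ℝ^k be a nonnegative solution of the cumulant system with u_0 = λ ∈ ℝ^k, λ ≥ 0, and C_0 = max_i λ_i/ξ_i. Then for all t ≥ 0, componentwise: u_t ≤ e^{Dt} λ and e^{Dt} λ − u_t ≤ (c ξ̄ / (2|μ|)) C_0 (1 − e^{μ t}) · e^{Dt} λ, where e^{Dt} is the matrix exponential. -/

import Mathlib

open Filter Topology

open Filter Topology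

namespace Stmt5Aux

open NormedSpace
open scoped Nat

variable {k : ℕ}

private lemma pow_entry_nonneg {A : Matrix (Fin k) (Fin k) ℝ} (hA : ∀ i j, 0 ≤ A i j) :
    ∀ (n : ℕ) (i j : Fin k), 0 ≤ (A ^ n) i j := by
  intro n
  induction n with
  | zero =>
    intro i j
    simp only [pow_zero, Matrix.one_apply]
    split <;> norm_num
  | succ n ih =>
    intro i j
    rw [pow_succ, Matrix.mul_apply]
    exact Finset.sum_nonneg fun l _ => mul_nonneg (ih i l) (hA l j)

lemma exp_entry (A : Matrix (Fin k) (Fin k) ℝ) (i j : Fin k) :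
    NormedSpace.exp A i j = ∑' n : ℕ, (n !⁻¹ : ℝ) * (A ^ n) i j := by
  letI : SeminormedRing (Matrix (Fin k) (Fin k) ℝ) := Matrix.linftyOpSemiNormedRing
  letI : NormedRing (Matrix (Fin k) (Fin k) ℝ) := Matrix.linftyOpNormedRing
  letI : NormedAlgebra ℝ (Matrix (Fin k) (Fin k) ℝ) := Matrix.linftyOpNormedAlgebra
  have hs : Summable fun n : ℕ => (n !⁻¹ : ℝ) • A ^ n := expSeries_summable' (𝕂 := ℝ) A
  have hc : Continuous fun B : Matrix (Fin k) (Fin k) ℝ => B i j :=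
    (continuous_apply j).comp (continuous_apply i)
  have hl : IsLinearMap ℝ (fun B : Matrix (Fin k) (Fin k) ℝ => B i j) :=
    ⟨fun _ _ => rfl, fun _ _ => rfl⟩
  let L : Matrix (Fin k) (Fin k) ℝ →L[ℝ] ℝ := ⟨hl.mk' _, hc⟩
  have h : (L (NormedSpace.exp A) : ℝ) = ∑' n : ℕ, L ((n !⁻¹ : ℝ) • A ^ n) := by
    rw [exp_eq_tsum ℝ]
    exact L.map_tsum hs
  exact h.trans (tsum_congr fun n => rfl)

lemma entry_summable (A : Matrix (Fin k) (Fin k) ℝ) (i j : Fin k) :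
    Summable fun n : ℕ => (n !⁻¹ : ℝ) * (A ^ n) i j := by
  letI : SeminormedRing (Matrix (Fin k) (Fin k) ℝ) := Matrix.linftyOpSemiNormedRing
  letI : NormedRing (Matrix (Fin k) (Fin k) ℝ) := Matrix.linftyOpNormedRing
  letI : NormedAlgebra ℝ (Matrix (Fin k) (Fin k) ℝ) := Matrix.linftyOpNormedAlgebra
  have hs : Summable fun n : ℕ => (n !⁻¹ : ℝ) • A ^ n := expSeries_summable' (𝕂 := ℝ) A
  have hc : Continuous fun B : Matrix (Fin k) (Fin k) ℝ => B i j :=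
    (continuous_apply j).comp (continuous_apply i)
  have hl : IsLinearMap ℝ (fun B : Matrix (Fin k) (Fin k) ℝ => B i j) :=
    ⟨fun _ _ => rfl, fun _ _ => rfl⟩
  let L : Matrix (Fin k) (Fin k) ℝ →L[ℝ] ℝ := ⟨hl.mk' _, hc⟩
  have := hs.map (L : Matrix (Fin k) (Fin k) ℝ →ₗ[ℝ] ℝ) L.continuous
  exact this

lemma exp_entry_nonneg {A : Matrix (Fin k) (Fin k) ℝ} (hA : ∀ i j, 0 ≤ A i j) (i j : Fin k) :
    0 ≤ NormedSpace.exp A i j := by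
  rw [exp_entry]
  exact tsum_nonneg fun n => mul_nonneg (by positivity) (pow_entry_nonneg hA n i j)

lemma exp_smul_add (D : Matrix (Fin k) (Fin k) ℝ) (s t : ℝ) :
    NormedSpace.exp ((s + t) • D) = NormedSpace.exp (s • D) * NormedSpace.exp (t • D) := by
  rw [add_smul]
  exact Matrix.exp_add_of_commute _ _ (((Commute.refl D).smul_left s).smul_right t)

lemma exp_zero_smul (D : Matrix (Fin k) (Fin k) ℝ) :
    NormedSpace.exp ((0 : ℝ) • D) = 1 := by
  rw [zero_smul]; exact exp_zero

lemma exp_smul_one (r : ℝ) :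
    NormedSpace.exp (r • (1 : Matrix (Fin k) (Fin k) ℝ)) = Real.exp r • 1 := by
  ext i j
  rw [exp_entry]
  have h1 : ∀ n : ℕ, (n !⁻¹ : ℝ) * ((r • (1 : Matrix (Fin k) (Fin k) ℝ)) ^ n) i j
      = ((n !⁻¹ : ℝ) * r ^ n) * (1 : Matrix (Fin k) (Fin k) ℝ) i j := by
    intro n
    rw [smul_pow, one_pow]
    simp [mul_assoc]
  rw [tsum_congr h1, tsum_mul_right]
  have h2 : ∑' n : ℕ, (n !⁻¹ : ℝ) * r ^ n = Real.exp r := by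
    rw [Real.exp_eq_exp_ℝ, exp_eq_tsum ℝ]
    exact tsum_congr fun n => (smul_eq_mul _ _).symm
  rw [h2]
  simp [Matrix.smul_apply]

lemma exp_metzler_nonneg {D : Matrix (Fin k) (Fin k) ℝ}
    (hM : ∀ i j : Fin k, i ≠ j → 0 ≤ D i j) {t : ℝ} (ht : 0 ≤ t) (i j : Fin k) :
    0 ≤ NormedSpace.exp (t • D) i j := by
  set α : ℝ := ∑ l, |D l l| with hα
  have hα0 : 0 ≤ α := Finset.sum_nonneg fun l _ => abs_nonneg _
  set A : Matrix (Fin k) (Fin k) ℝ := D + α • 1 with hA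
  have hAnn : ∀ i j, 0 ≤ A i j := by
    intro i j
    rcases eq_or_ne i j with rfl | hij
    · have h1 : A i i = D i i + α := by simp [hA, Matrix.one_apply]
      have h2 : |D i i| ≤ α :=
        Finset.single_le_sum (f := fun l => |D l l|) (fun l _ => abs_nonneg _) (Finset.mem_univ i)
      rw [h1]
      have := neg_abs_le (D i i)
      linarith
    · have h1 : A i j = D i j := by simp [hA, Matrix.one_apply, hij]
      rw [h1]; exact hM i j hij
  have hsplit : t • D = t • A + (-(t * α)) • (1 : Matrix (Fin k) (Fin k) ℝ) := by
    rw [hA]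
    rw [smul_add, smul_smul]
    module
  have hcomm : Commute (t • A) ((-(t * α)) • (1 : Matrix (Fin k) (Fin k) ℝ)) :=
    ((Commute.one_right (t • A)).smul_right _)
  have hkey : NormedSpace.exp (t • D)
      = NormedSpace.exp (t • A) * (Real.exp (-(t * α)) • 1) := by
    rw [hsplit, Matrix.exp_add_of_commute _ _ hcomm, exp_smul_one]
  rw [hkey]
  have htA : ∀ i j, 0 ≤ (t • A) i j := fun i j => by
    simpa [Matrix.smul_apply] using mul_nonneg ht (hAnn i j)
  rw [Matrix.mul_apply]
  refine Finset.sum_nonneg fun l _ => mul_nonneg (exp_entry_nonneg htA i l) ?_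
  simp only [Matrix.smul_apply, Matrix.one_apply, smul_eq_mul]
  split <;> simp [Real.exp_nonneg, le_of_lt (Real.exp_pos _)]


lemma pow_smul_mulVec_eigen {D : Matrix (Fin k) (Fin k) ℝ} {μ : ℝ} {ξ : Fin k → ℝ}
    (hξ : D.mulVec ξ = μ • ξ) (t : ℝ) :
    ∀ n : ℕ, ((t • D) ^ n).mulVec ξ = (t * μ) ^ n • ξ := by
  intro n
  induction n with
  | zero => simp [Matrix.one_mulVec]
  | succ n ih =>
    rw [pow_succ, ← Matrix.mulVec_mulVec, Matrix.smul_mulVec, hξ, smul_smul,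
      Matrix.mulVec_smul, ih, smul_smul, ← pow_succ']

lemma exp_smul_mulVec_eigen {D : Matrix (Fin k) (Fin k) ℝ} {μ : ℝ} {ξ : Fin k → ℝ}
    (hξ : D.mulVec ξ = μ • ξ) (t : ℝ) :
    (NormedSpace.exp (t • D)).mulVec ξ = Real.exp (t * μ) • ξ := by
  have hpow := pow_smul_mulVec_eigen hξ t
  funext i
  have h1 : (NormedSpace.exp (t • D)).mulVec ξ i
      = ∑ j, (∑' n : ℕ, ((n ! : ℝ))⁻¹ * ((t • D) ^ n) i j) * ξ j := by
    simp only [Matrix.mulVec, dotProduct]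
    exact Finset.sum_congr rfl fun j _ => by rw [exp_entry]
  rw [h1]
  have h2 : ∀ j, (∑' n : ℕ, ((n ! : ℝ))⁻¹ * ((t • D) ^ n) i j) * ξ j
      = ∑' n : ℕ, ((n ! : ℝ))⁻¹ * ((t • D) ^ n) i j * ξ j := by
    intro j; rw [tsum_mul_right]
  rw [Finset.sum_congr rfl fun j _ => h2 j]
  rw [← Summable.tsum_finsetSum (fun j _ => (entry_summable (t • D) i j).mul_right (ξ j))]
  have h3 : ∀ n : ℕ, (∑ j, ((n ! : ℝ))⁻¹ * ((t • D) ^ n) i j * ξ j)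
      = (((n ! : ℝ))⁻¹ * (t * μ) ^ n) * ξ i := by
    intro n
    have : (∑ j, ((n ! : ℝ))⁻¹ * ((t • D) ^ n) i j * ξ j)
        = ((n ! : ℝ))⁻¹ * (((t • D) ^ n).mulVec ξ) i := by
      simp only [Matrix.mulVec, dotProduct, Finset.mul_sum, mul_assoc]
    rw [this, hpow n]
    simp [mul_assoc]
  rw [tsum_congr h3, tsum_mul_right]
  have h4 : ∑' n : ℕ, ((n ! : ℝ))⁻¹ * (t * μ) ^ n = Real.exp (t * μ) := by
    rw [Real.exp_eq_exp_ℝ, NormedSpace.exp_eq_tsum ℝ]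
    exact tsum_congr fun n => (smul_eq_mul _ _).symm
  rw [h4]
  simp

lemma exp_smul_entry_hasDerivAt (D : Matrix (Fin k) (Fin k) ℝ) (t : ℝ) (i j : Fin k) :
    HasDerivAt (fun s : ℝ => NormedSpace.exp (s • D) i j)
      ((NormedSpace.exp (t • D) * D) i j) t := by
  letI : SeminormedRing (Matrix (Fin k) (Fin k) ℝ) := Matrix.linftyOpSemiNormedRing
  letI : NormedRing (Matrix (Fin k) (Fin k) ℝ) := Matrix.linftyOpNormedRing
  letI : NormedAlgebra ℝ (Matrix (Fin k) (Fin k) ℝ) := Matrix.linftyOpNormedAlgebra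
  have h := hasDerivAt_exp_smul_const D t
  have hc : Continuous fun A : Matrix (Fin k) (Fin k) ℝ => A i j :=
    (continuous_apply j).comp (continuous_apply i)
  have hl : IsLinearMap ℝ (fun A : Matrix (Fin k) (Fin k) ℝ => A i j) :=
    ⟨fun _ _ => rfl, fun _ _ => rfl⟩
  let L : Matrix (Fin k) (Fin k) ℝ →L[ℝ] ℝ := ⟨hl.mk' _, hc⟩
  exact (L.hasFDerivAt.comp_hasDerivAt t h : _)

lemma exp_smul_entry_continuous (D : Matrix (Fin k) (Fin k) ℝ) (i j : Fin k) :
    Continuous fun s : ℝ => NormedSpace.exp (s • D) i j :=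
  continuous_iff_continuousAt.2 fun t => (exp_smul_entry_hasDerivAt D t i j).continuousAt


lemma mulVec_mono {A : Matrix (Fin k) (Fin k) ℝ} (hA : ∀ i j, 0 ≤ A i j)
    {x y : Fin k → ℝ} (h : ∀ j, x j ≤ y j) (i : Fin k) :
    A.mulVec x i ≤ A.mulVec y i := by
  simp only [Matrix.mulVec, dotProduct]
  exact Finset.sum_le_sum fun j _ => mul_le_mul_of_nonneg_left (h j) (hA i j)

lemma mulVec_nonneg {A : Matrix (Fin k) (Fin k) ℝ} (hA : ∀ i j, 0 ≤ A i j)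
    {x : Fin k → ℝ} (hx : ∀ j, 0 ≤ x j) (i : Fin k) : 0 ≤ A.mulVec x i := by
  simp only [Matrix.mulVec, dotProduct]
  exact Finset.sum_nonneg fun j _ => mul_nonneg (hA i j) (hx j)

end Stmt5Aux


open Stmt5Aux

/-- (Inequality (2.13) of the paper, subcritical case.) For a nonnegative
solution of the cumulant system with `μ < 0`, one has componentwise
`u_t ≤ e^{Dt} λ` and `e^{Dt} λ − u_t ≤ (c ξ̄ / (2|μ|)) C₀ (1 − e^{μt}) e^{Dt} λ`. -/
theorem stmt5 (k : ℕ) (hk : 1 ≤ k) (c : ℝ) (hc : 0 < c)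
    (D : Matrix (Fin k) (Fin k) ℝ)
    (hMetzler : ∀ i j : Fin k, i ≠ j → 0 ≤ D i j)
    (μ : ℝ) (hμ : μ < 0) (ξ : Fin k → ℝ) (hξpos : ∀ i, 0 < ξ i)
    (heig : D.mulVec ξ = μ • ξ)
    (lam : Fin k → ℝ) (hlam : ∀ i, 0 ≤ lam i)
    (u : ℝ → Fin k → ℝ)
    (hsol : ∀ t ∈ Set.Ici (0 : ℝ),
      HasDerivAt u (D.mulVec (u t) - (c / 2) • (u t * u t)) t)
    (hnonneg : ∀ t ∈ Set.Ici (0 : ℝ), ∀ i : Fin k, 0 ≤ u t i)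
    (hinit : u 0 = lam)
    (C₀ ξmax : ℝ) (hC₀ : C₀ = ⨆ i, lam i / ξ i) (hξmax : ξmax = ⨆ i, ξ i) :
    ∀ t ≥ (0 : ℝ), ∀ i : Fin k,
      u t i ≤ ((NormedSpace.exp (t • D)).mulVec lam) i ∧
      ((NormedSpace.exp (t • D)).mulVec lam) i - u t i ≤
        c * ξmax / (2 * |μ|) * C₀ * (1 - Real.exp (μ * t)) *
          ((NormedSpace.exp (t • D)).mulVec lam) i := by
  classical
  set E : ℝ → Matrix (Fin k) (Fin k) ℝ := fun s => NormedSpace.exp (s • D) with hEdef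
  have hE0 : E 0 = 1 := exp_zero_smul D
  have hEadd : ∀ s t : ℝ, E s * E t = E (s + t) := fun s t => (exp_smul_add D s t).symm
  have hEnn : ∀ {s : ℝ}, 0 ≤ s → ∀ i j, 0 ≤ E s i j :=
    fun hs i j => exp_metzler_nonneg hMetzler hs i j
  have hEeig : ∀ s : ℝ, (E s).mulVec ξ = Real.exp (s * μ) • ξ :=
    fun s => exp_smul_mulVec_eigen heig s
  have hEd : ∀ (s : ℝ) (i j : Fin k), HasDerivAt (fun r : ℝ => E r i j) ((E s * D) i j) s :=
    fun s i j => exp_smul_entry_hasDerivAt D s i j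
  have hEneg : ∀ (s : ℝ) (i j : Fin k),
      HasDerivAt (fun r : ℝ => E (-r) i j) (-((E (-s) * D) i j)) s := by
    intro s i j
    have h := (hEd (-s) i j).comp s (hasDerivAt_neg s)
    rw [mul_neg_one] at h
    exact h
  have hEnegc : ∀ i j : Fin k, Continuous fun s : ℝ => E (-s) i j := fun i j =>
    continuous_iff_continuousAt.2 fun s => (hEneg s i j).continuousAt
  have hu' : ∀ s, 0 ≤ s → ∀ j, HasDerivAt (fun r => u r j)
      ((D.mulVec (u s) - (c / 2) • (u s * u s)) j) s := by
    intro s hs j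
    exact (ContinuousLinearMap.proj j).hasFDerivAt.comp_hasDerivAt s (hsol s hs)
  have hucont : ∀ (j : Fin k) (s : ℝ), 0 ≤ s → ContinuousAt (fun r => u r j) s := by
    intro j s hs
    exact ((continuous_apply j).continuousAt).comp (hsol s hs).continuousAt
  -- the function g and its derivative
  set g : Fin k → ℝ → ℝ := fun j r => ∑ l, E (-r) j l * u r l with hgdef
  have hgmul : ∀ j r, g j r = (E (-r)).mulVec (u r) j := by
    intro j r; simp [hgdef, Matrix.mulVec, dotProduct]
  have hgd : ∀ s, 0 ≤ s → ∀ j, HasDerivAt (g j)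
      (-(c / 2 * ((E (-s)).mulVec (u s * u s) j))) s := by
    intro s hs j
    have h1 : HasDerivAt (g j)
        (∑ l, (-((E (-s) * D) j l) * u s l
          + E (-s) j l * ((D.mulVec (u s) - (c / 2) • (u s * u s)) l))) s :=
      HasDerivAt.fun_sum fun l _ => ((hEneg s j l).mul (hu' s hs l))
    convert h1 using 1
    have expand : ∀ l, -((E (-s) * D) j l) * u s l
        + E (-s) j l * ((D.mulVec (u s) - (c / 2) • (u s * u s)) l)
        = (E (-s) j l * (D.mulVec (u s) l) - ((E (-s) * D) j l) * u s l)
          - c / 2 * (E (-s) j l * ((u s * u s) l)) := by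
      intro l
      simp only [Pi.sub_apply, Pi.smul_apply, smul_eq_mul]
      ring
    rw [Finset.sum_congr rfl fun l _ => expand l, Finset.sum_sub_distrib,
      Finset.sum_sub_distrib, ← Finset.mul_sum]
    have hswap : ∑ l, E (-s) j l * (D.mulVec (u s) l) = ∑ l, ((E (-s) * D) j l) * u s l := by
      simp only [Matrix.mulVec, dotProduct, Matrix.mul_apply, Finset.mul_sum,
        Finset.sum_mul]
      rw [Finset.sum_comm]
      exact Finset.sum_congr rfl fun m _ => Finset.sum_congr rfl fun l _ => by ring
    rw [hswap]
    simp only [Matrix.mulVec, dotProduct]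
    ring
  -- continuity of the integrand
  have hicont : ∀ (j : Fin k) (s : ℝ), 0 ≤ s →
      ContinuousAt (fun r => (E (-r)).mulVec (u r * u r) j) s := by
    intro j s hs
    have heq : (fun r => (E (-r)).mulVec (u r * u r) j)
        = fun r => ∑ l, E (-r) j l * (u r l * u r l) := by
      funext r; simp [Matrix.mulVec, dotProduct]
    rw [heq]
    exact tendsto_finset_sum _ fun l _ =>
      ((hEnegc j l).continuousAt.mul ((hucont l s hs).mul (hucont l s hs)))
  have hiint : ∀ (t : ℝ), 0 ≤ t → ∀ j : Fin k,
      IntervalIntegrable (fun s => c / 2 * ((E (-s)).mulVec (u s * u s) j))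
        MeasureTheory.volume 0 t := by
    intro t ht j
    apply ContinuousOn.intervalIntegrable
    rw [Set.uIcc_of_le ht]
    exact continuousOn_of_forall_continuousAt fun s hs => (continuousAt_const.mul (hicont j s hs.1))
  -- FTC
  have hgint : ∀ t, 0 ≤ t → ∀ j,
      ∫ s in (0:ℝ)..t, c / 2 * ((E (-s)).mulVec (u s * u s) j) = lam j - g j t := by
    intro t ht j
    have hderiv : ∀ s ∈ Set.uIcc (0:ℝ) t,
        HasDerivAt (g j) (-(c / 2 * ((E (-s)).mulVec (u s * u s) j))) s := by
      intro s hs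
      rw [Set.uIcc_of_le ht] at hs
      exact hgd s hs.1 j
    have hcont : IntervalIntegrable (fun s => -(c / 2 * ((E (-s)).mulVec (u s * u s) j)))
        MeasureTheory.volume 0 t := (hiint t ht j).neg
    have hftc := intervalIntegral.integral_eq_sub_of_hasDerivAt hderiv hcont
    rw [intervalIntegral.integral_neg] at hftc
    have hg0 : g j 0 = lam j := by
      rw [hgmul, neg_zero, hE0, Matrix.one_mulVec, hinit]
    linarith [hftc]
  -- the main integral identity
  have main : ∀ t, 0 ≤ t → ∀ i,
      (E t).mulVec lam i - u t i
        = ∫ s in (0:ℝ)..t, c / 2 * ((E (t - s)).mulVec (u s * u s) i) := by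
    intro t ht i
    have hrepr : u t i = ∑ j, E t i j * g j t := by
      have h2 : (fun j => g j t) = (E (-t)).mulVec (u t) := funext fun j => hgmul j t
      have h1 : (E t).mulVec (fun j => g j t) = u t := by
        rw [h2, Matrix.mulVec_mulVec, hEadd, add_neg_cancel, hE0, Matrix.one_mulVec]
      calc u t i = (E t).mulVec (fun j => g j t) i := by rw [h1]
        _ = ∑ j, E t i j * g j t := by simp [Matrix.mulVec, dotProduct]
    have hlamr : (E t).mulVec lam i = ∑ j, E t i j * lam j := by
      simp [Matrix.mulVec, dotProduct]
    rw [hrepr, hlamr, ← Finset.sum_sub_distrib]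
    have hstep : ∀ j ∈ Finset.univ, E t i j * lam j - E t i j * g j t
        = ∫ s in (0:ℝ)..t, E t i j * (c / 2 * ((E (-s)).mulVec (u s * u s) j)) := by
      intro j _
      rw [← mul_sub, ← hgint t ht j, ← intervalIntegral.integral_const_mul]
    rw [Finset.sum_congr rfl hstep,
      ← intervalIntegral.integral_finset_sum fun j _ => (hiint t ht j).const_mul _]
    apply intervalIntegral.integral_congr
    intro s _
    have hEE : E t * E (-s) = E (t - s) := by rw [hEadd, ← sub_eq_add_neg]
    calc (∑ j, E t i j * (c / 2 * ((E (-s)).mulVec (u s * u s) j)))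
        = c / 2 * ∑ j, E t i j * ((E (-s)).mulVec (u s * u s) j) := by
          rw [Finset.mul_sum]
          exact Finset.sum_congr rfl fun j _ => by ring
      _ = c / 2 * ((E t).mulVec ((E (-s)).mulVec (u s * u s)) i) := by
          simp [Matrix.mulVec, dotProduct]
      _ = c / 2 * ((E (t - s)).mulVec (u s * u s) i) := by
          rw [Matrix.mulVec_mulVec, hEE]
  -- part 1
  have part1 : ∀ t, 0 ≤ t → ∀ i, u t i ≤ (E t).mulVec lam i := by
    intro t ht i
    have h := main t ht i
    have h0 : 0 ≤ ∫ s in (0:ℝ)..t, c / 2 * ((E (t - s)).mulVec (u s * u s) i) := by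
      apply intervalIntegral.integral_nonneg ht
      intro s hs
      have hts : (0:ℝ) ≤ t - s := by linarith [hs.2]
      exact mul_nonneg (by linarith)
        (mulVec_nonneg (hEnn hts) (fun l => mul_nonneg (hnonneg s hs.1 l) (hnonneg s hs.1 l)) i)
    linarith
  -- constants
  have hμabs : |μ| = -μ := abs_of_neg hμ
  have hμne : μ ≠ 0 := ne_of_lt hμ
  let i0 : Fin k := ⟨0, hk⟩
  have hbdd1 : BddAbove (Set.range fun i => lam i / ξ i) := Set.Finite.bddAbove (Set.finite_range _)
  have hC₀0 : 0 ≤ C₀ := by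
    rw [hC₀]
    exact le_trans (div_nonneg (hlam i0) (hξpos i0).le) (le_ciSup hbdd1 i0)
  have hlamle : ∀ j, lam j ≤ C₀ * ξ j := by
    intro j
    have h1 : lam j / ξ j ≤ C₀ := hC₀ ▸ le_ciSup hbdd1 j
    exact (div_le_iff₀ (hξpos j)).1 h1
  have hξle : ∀ j, ξ j ≤ ξmax := fun j =>
    hξmax ▸ le_ciSup (Set.Finite.bddAbove (Set.finite_range _)) j
  have hξmax0 : 0 < ξmax := lt_of_lt_of_le (hξpos i0) (hξle i0)
  -- pointwise bound on u
  have hub : ∀ s, 0 ≤ s → ∀ j, u s j ≤ C₀ * Real.exp (s * μ) * ξmax := by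
    intro s hs j
    have h1 : u s j ≤ (E s).mulVec lam j := part1 s hs j
    have h2 : (E s).mulVec lam j ≤ (E s).mulVec (C₀ • ξ) j :=
      mulVec_mono (hEnn hs) (fun l => hlamle l) j
    have h3 : (E s).mulVec (C₀ • ξ) j = C₀ * (Real.exp (s * μ) * ξ j) := by
      rw [Matrix.mulVec_smul, hEeig]
      simp [mul_assoc]
    have h4 : C₀ * (Real.exp (s * μ) * ξ j) ≤ C₀ * Real.exp (s * μ) * ξmax := by
      rw [mul_assoc]
      exact mul_le_mul_of_nonneg_left
        (mul_le_mul_of_nonneg_left (hξle j) (Real.exp_pos _).le) hC₀0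
    linarith
  -- the exponential integral
  have hexpint : ∀ t : ℝ, ∫ s in (0:ℝ)..t, Real.exp (s * μ) = (Real.exp (t * μ) - 1) / μ := by
    intro t
    have hderiv : ∀ s ∈ Set.uIcc (0:ℝ) t,
        HasDerivAt (fun r : ℝ => Real.exp (r * μ) / μ) (Real.exp (s * μ)) s := by
      intro s _
      have h1 : HasDerivAt (fun r : ℝ => r * μ) μ s := by
        simpa using (hasDerivAt_id s).mul_const μ
      have h2 := (Real.hasDerivAt_exp (s * μ)).comp s h1
      have h3 := h2.div_const μ
      simpa [mul_div_assoc, mul_div_cancel_right₀ _ hμne] using h3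
    have hcont : IntervalIntegrable (fun s : ℝ => Real.exp (s * μ))
        MeasureTheory.volume 0 t :=
      (Real.continuous_exp.comp (continuous_id.mul continuous_const)).intervalIntegrable 0 t
    have := intervalIntegral.integral_eq_sub_of_hasDerivAt hderiv hcont
    rw [this]
    simp [sub_div]
  -- part 2
  intro t ht i
  refine ⟨part1 t ht i, ?_⟩
  have hV0 : 0 ≤ (E t).mulVec lam i := mulVec_nonneg (hEnn ht) hlam i
  set V : ℝ := (E t).mulVec lam i with hVdef
  have hbnd : ∀ s ∈ Set.Icc (0:ℝ) t,
      c / 2 * ((E (t - s)).mulVec (u s * u s) i)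
        ≤ (c / 2 * C₀ * ξmax * V) * Real.exp (s * μ) := by
    intro s hs
    have hs0 : (0:ℝ) ≤ s := hs.1
    have hts : (0:ℝ) ≤ t - s := by linarith [hs.2]
    set K : ℝ := C₀ * Real.exp (s * μ) * ξmax with hKdef
    have hK0 : 0 ≤ K := by positivity
    have hm1 : (E (t - s)).mulVec (u s * u s) i ≤ (E (t - s)).mulVec (K • u s) i := by
      apply mulVec_mono (hEnn hts)
      intro l
      simp only [Pi.mul_apply, Pi.smul_apply, smul_eq_mul]
      exact mul_le_mul_of_nonneg_right (hub s hs0 l) (hnonneg s hs0 l)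
    have hm2 : (E (t - s)).mulVec (K • u s) i = K * ((E (t - s)).mulVec (u s) i) := by
      rw [Matrix.mulVec_smul]; rfl
    have hm3 : (E (t - s)).mulVec (u s) i ≤ (E (t - s)).mulVec ((E s).mulVec lam) i :=
      mulVec_mono (hEnn hts) (fun l => part1 s hs0 l) i
    have hm4 : (E (t - s)).mulVec ((E s).mulVec lam) i = V := by
      rw [Matrix.mulVec_mulVec, hEadd, sub_add_cancel]
    have hchain : (E (t - s)).mulVec (u s * u s) i ≤ K * V := by
      rw [hm2] at hm1
      have := mul_le_mul_of_nonneg_left hm3 hK0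
      rw [hm4] at this
      linarith
    have := mul_le_mul_of_nonneg_left hchain (by linarith : (0:ℝ) ≤ c / 2)
    calc c / 2 * ((E (t - s)).mulVec (u s * u s) i) ≤ c / 2 * (K * V) := this
      _ = (c / 2 * C₀ * ξmax * V) * Real.exp (s * μ) := by rw [hKdef]; ring
  have hlint : IntervalIntegrable (fun s => c / 2 * ((E (t - s)).mulVec (u s * u s) i))
      MeasureTheory.volume 0 t := by
    apply ContinuousOn.intervalIntegrable
    rw [Set.uIcc_of_le ht]
    apply continuousOn_of_forall_continuousAt
    intro s hs
    apply continuousAt_const.mul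
    have heq : (fun r => (E (t - r)).mulVec (u r * u r) i)
        = fun r => ∑ l, E (t - r) i l * (u r l * u r l) := by
      funext r; simp [Matrix.mulVec, dotProduct]
    rw [heq]
    refine tendsto_finset_sum _ fun l _ => ContinuousAt.mul ?_ ((hucont l s hs.1).mul (hucont l s hs.1))
    exact ((exp_smul_entry_continuous D i l).comp (continuous_const.sub continuous_id)).continuousAt
  have hrint : IntervalIntegrable (fun s => (c / 2 * C₀ * ξmax * V) * Real.exp (s * μ))
      MeasureTheory.volume 0 t :=
    (continuous_const.mul
      (Real.continuous_exp.comp (continuous_id.mul continuous_const))).intervalIntegrable 0 t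
  have hmono := intervalIntegral.integral_mono_on ht hlint hrint hbnd
  have hR : (∫ s in (0:ℝ)..t, (c / 2 * C₀ * ξmax * V) * Real.exp (s * μ))
      = c / 2 * C₀ * ξmax * V * ((Real.exp (t * μ) - 1) / μ) := by
    rw [intervalIntegral.integral_const_mul, hexpint t]
  have hfin : (E t).mulVec lam i - u t i
      ≤ c / 2 * C₀ * ξmax * V * ((Real.exp (t * μ) - 1) / μ) := by
    rw [main t ht i]; exact hmono.trans hR.le
  have halg : c / 2 * C₀ * ξmax * V * ((Real.exp (t * μ) - 1) / μ)
      = c * ξmax / (2 * |μ|) * C₀ * (1 - Real.exp (μ * t)) * V := by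
    rw [hμabs, mul_comm μ t]
    field_simp
    ring
  rw [halg] at hfin
  exact hfin
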